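/- For every Δ ≥ 0, the function r_Δ has a first zero θ_Δ ∈ (0,∞), r_Δ is strictly decreasing on [0, θ_Δ], and θ_Δ ≥ √2. -/
import Mathlib


open MeasureTheory Set Filter

/-- `x` solves the delay equation `x''(t) + p(t)·x(t − τ(t)) = 0` on `I` in the
Carathéodory sense: `x` is differentiable on `I` and on `I` its derivative is an
indefinite integral of `-p(u)·x(u − τ(u))` (so `x` and its derivative are locally
absolutely continuous there, and the equation holds for a.e. `t ∈ I`). -/
def SolvesDDE (p τ x : ℝ → ℝ) (I : Set ℝ) : Prop :=
  (∀ t ∈ I, HasDerivAt x (deriv x t) t) ∧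
  (∀ t₀ ∈ I, ∀ t ∈ I, deriv x t = deriv x t₀ - ∫ u in t₀..t, p u * x (u - τ u))

/-- `r` is the solution `r_Δ` of `r''(t) + r(t − Δ) = 0`, `t ≥ 0`, with `r ≡ 1` on
`(-∞,0]` and `r'(0) = 0` (the derivative is an indefinite integral of `-r(· - Δ)`). -/
def IsDelayCosine (Δ : ℝ) (r : ℝ → ℝ) : Prop :=
  (∀ t ≤ (0:ℝ), r t = 1) ∧
  (∀ t, 0 ≤ t → HasDerivAt r (deriv r t) t) ∧
  (∀ t, 0 ≤ t → deriv r t = - ∫ u in (0:ℝ)..t, r (u - Δ))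

/-- `θ` is the first zero of `r` on `[0,∞)`. -/
def IsFirstZero (r : ℝ → ℝ) (θ : ℝ) : Prop :=
  0 < θ ∧ r θ = 0 ∧ ∀ t, 0 ≤ t → t < θ → 0 < r t

/-- `g(w) = ρ·r(θ − w − Δ)·χ_{[−Δ,0]}(w)`. -/
noncomputable def gAux (ρ Δ θ : ℝ) (r : ℝ → ℝ) : ℝ → ℝ :=
  (Set.Icc (-Δ) (0:ℝ)).indicator fun w => ρ * r (θ - w - Δ)

/-- The double integral `∫_{-c}^0 (∫_{-c}^s max (β w) (g w) dw) ds`. -/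
noncomputable def doubleInt (g β : ℝ → ℝ) (c : ℝ) : ℝ :=
  ∫ s in (-c)..(0:ℝ), ∫ w in (-c)..s, max (β w) (g w)

/-- The recursively defined sequences `β_n`, `ϖ_n` associated with `g`. -/
def IsBetaSeq (g : ℝ → ℝ) (β : ℕ → ℝ → ℝ) (ϖ : ℕ → ℝ) : Prop :=
  (∀ t ≤ (0:ℝ), β 0 t = 1) ∧
  ∀ n : ℕ,
    (0 < ϖ n ∧ doubleInt g (β n) (ϖ n) = 1) ∧
    (∀ t, t ≤ -ϖ n → β (n+1) t = 1) ∧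
    (∀ t, -ϖ n ≤ t → t ≤ 0 →
      β (n+1) t = 1 - ∫ s in (-ϖ n)..t, ∫ w in (-ϖ n)..s, max (β n w) (g w))

/-- `x` has a locally absolutely continuous derivative on `[a,b]`, with a.e. second
derivative `w`. -/
def HasSecondDerivAEOn (x w : ℝ → ℝ) (a b : ℝ) : Prop :=
  (∀ t ∈ Set.Icc a b, HasDerivAt x (deriv x t) t) ∧
  (∀ t ∈ Set.Icc a b, deriv x t = deriv x a + ∫ u in a..t, w u)

/-- `r_Δ` has a first zero `θ_Δ ∈ (0,∞)`, is strictly decreasing on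
`[0, θ_Δ]`, and `θ_Δ ≥ √2`. -/
theorem rDelta_first_zero (Δ : ℝ) (hΔ : 0 ≤ Δ) (r : ℝ → ℝ)
    (hr : IsDelayCosine Δ r) :
    ∃ θ : ℝ, IsFirstZero r θ ∧ StrictAntiOn r (Set.Icc 0 θ) ∧ Real.sqrt 2 ≤ θ := by
  obtain ⟨hist, hder, hdf⟩ := hr
  -- continuity of r
  have hcont : Continuous r := by
    rw [continuous_iff_continuousAt]
    intro t
    rcases lt_or_ge t 0 with h | h
    · have hev : r =ᶠ[nhds t] fun _ => 1 := by
        filter_upwards [Iio_mem_nhds h] with s hs using hist s hs.le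
      exact (continuousAt_congr hev).2 continuousAt_const
    · exact (hder t h).continuousAt
  have hcd : Continuous fun u => r (u - Δ) :=
    hcont.comp (continuous_id.sub continuous_const)
  have hcdInt : ∀ a b : ℝ, IntervalIntegrable (fun u => r (u - Δ)) volume a b :=
    fun a b => hcd.intervalIntegrable a b
  have hG : Continuous fun t => -∫ u in (0:ℝ)..t, r (u - Δ) :=
    (intervalIntegral.continuous_primitive hcdInt 0).neg
  have r0 : r 0 = 1 := hist 0 le_rfl
  -- there is a point in [0,3] where r ≤ 0
  have hex : ∃ t ∈ Icc (0:ℝ) 3, r t ≤ 0 := by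
    by_contra hcon
    push_neg at hcon
    have hpos : ∀ t ∈ Icc (0:ℝ) 3, 0 < r t := hcon
    have hnn : ∀ u : ℝ, u ≤ 3 → 0 ≤ r (u - Δ) := by
      intro u hu
      rcases le_or_gt (u - Δ) 0 with h | h
      · rw [hist _ h]; norm_num
      · exact (hpos _ ⟨h.le, by linarith⟩).le
    have hderiv_le : ∀ t ∈ Icc (0:ℝ) 3, deriv r t ≤ 0 := by
      intro t ht
      rw [hdf t ht.1, neg_nonpos]
      exact intervalIntegral.integral_nonneg ht.1
        (fun u hu => hnn u (le_trans hu.2 ht.2))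
    have hanti : AntitoneOn r (Icc (0:ℝ) 3) := by
      apply antitoneOn_of_deriv_nonpos (convex_Icc 0 3) hcont.continuousOn
      · intro x hx
        rw [interior_Icc] at hx
        exact (hder x hx.1.le).differentiableAt.differentiableWithinAt
      · intro x hx
        rw [interior_Icc] at hx
        exact hderiv_le x ⟨hx.1.le, hx.2.le⟩
    have r1le1 : r 1 ≤ 1 := by
      have := hanti (by norm_num : (0:ℝ) ∈ Icc (0:ℝ) 3)
        (by norm_num : (1:ℝ) ∈ Icc (0:ℝ) 3) (by norm_num)
      rwa [r0] at this
    have hI1 : r 1 ≤ ∫ u in (0:ℝ)..1, r (u - Δ) := by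
      have hm : ∫ u in (0:ℝ)..1, r 1 ≤ ∫ u in (0:ℝ)..1, r (u - Δ) := by
        apply intervalIntegral.integral_mono_on (by norm_num)
          intervalIntegrable_const (hcdInt 0 1)
        intro u hu
        rcases le_or_gt (u - Δ) 0 with h | h
        · rw [hist _ h]; exact r1le1
        · exact hanti ⟨h.le, by linarith [hu.2]⟩
            (by norm_num : (1:ℝ) ∈ Icc (0:ℝ) 3) (by linarith [hu.2])
      simpa using hm
    have hd13 : ∀ t ∈ Icc (1:ℝ) 3, deriv r t ≤ -(r 1) := by
      intro t ht
      rw [hdf t (by linarith [ht.1])]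
      have hsplit : ∫ u in (0:ℝ)..t, r (u - Δ)
          = (∫ u in (0:ℝ)..1, r (u - Δ)) + ∫ u in (1:ℝ)..t, r (u - Δ) :=
        (intervalIntegral.integral_add_adjacent_intervals (hcdInt 0 1) (hcdInt 1 t)).symm
      have h2 : 0 ≤ ∫ u in (1:ℝ)..t, r (u - Δ) :=
        intervalIntegral.integral_nonneg ht.1 (fun u hu => hnn u (le_trans hu.2 ht.2))
      linarith
    have hDcont : ContinuousOn (deriv r) (Icc (1:ℝ) 3) := by
      apply hG.continuousOn.congr
      intro t ht
      exact hdf t (by linarith [ht.1])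
    have hDint : IntervalIntegrable (deriv r) volume 1 3 := by
      apply ContinuousOn.intervalIntegrable
      rwa [uIcc_of_le (by norm_num : (1:ℝ) ≤ 3)]
    have hftc : ∫ u in (1:ℝ)..3, deriv r u = r 3 - r 1 := by
      apply intervalIntegral.integral_eq_sub_of_hasDerivAt _ hDint
      intro t ht
      rw [uIcc_of_le (by norm_num : (1:ℝ) ≤ 3)] at ht
      exact hder t (by linarith [ht.1])
    have hmono : ∫ u in (1:ℝ)..3, deriv r u ≤ ∫ u in (1:ℝ)..3, -(r 1) := by
      apply intervalIntegral.integral_mono_on (by norm_num) hDint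
        intervalIntegrable_const hd13
    have hc : ∫ u in (1:ℝ)..3, -(r 1) = 2 * (-(r 1)) := by
      rw [intervalIntegral.integral_const, smul_eq_mul]
      norm_num
    have h31 := hpos 3 (by norm_num)
    have h11 := hpos 1 (by norm_num)
    linarith
  -- define θ as the infimum of zeros in [0,3]
  obtain ⟨t₀, ht₀I, ht₀⟩ := hex
  set S : Set ℝ := Icc (0:ℝ) 3 ∩ {t | r t ≤ 0} with hSdef
  have hSne : S.Nonempty := ⟨t₀, ht₀I, ht₀⟩
  have hSclosed : IsClosed S :=
    isClosed_Icc.inter (isClosed_le hcont continuous_const)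
  have hSbdd : BddBelow S := ⟨0, fun x hx => hx.1.1⟩
  set θ : ℝ := sInf S with hθdef
  have hθS : θ ∈ S := hSclosed.csInf_mem hSne hSbdd
  have hθ0' : 0 ≤ θ := hθS.1.1
  have hθ3 : θ ≤ 3 := hθS.1.2
  have hθpos : 0 < θ := by
    rcases eq_or_lt_of_le hθ0' with h | h
    · exfalso
      have h2 : r θ ≤ 0 := hθS.2
      rw [← h, r0] at h2
      norm_num at h2
    · exact h
  have hbefore : ∀ t, 0 ≤ t → t < θ → 0 < r t := by
    intro t ht0 htθ
    by_contra hle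
    push_neg at hle
    have : t ∈ S := ⟨⟨ht0, by linarith⟩, hle⟩
    have := csInf_le hSbdd this
    linarith
  have hθzero : r θ = 0 := by
    refine le_antisymm hθS.2 ?_
    have htend : Tendsto r (nhdsWithin θ (Iio θ)) (nhds (r θ)) :=
      (hcont.continuousAt (x := θ)).continuousWithinAt.tendsto
    refine ge_of_tendsto htend ?_
    filter_upwards [Ioo_mem_nhdsLT_of_mem (⟨hθpos, le_rfl⟩ : θ ∈ Ioc (0:ℝ) θ)] with t ht
    exact (hbefore t ht.1.le ht.2).le
  -- strict decrease on [0, θ]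
  have hSA : StrictAntiOn r (Icc 0 θ) := by
    apply strictAntiOn_of_deriv_neg (convex_Icc 0 θ) hcont.continuousOn
    intro x hx
    rw [interior_Icc] at hx
    rw [hdf x hx.1.le, neg_lt_zero]
    apply intervalIntegral.intervalIntegral_pos_of_pos_on (hcdInt 0 x) _ hx.1
    intro u hu
    rcases le_or_gt (u - Δ) 0 with h | h
    · rw [hist _ h]; norm_num
    · exact hbefore _ h.le (by linarith [hu.2, hx.2])
  -- θ ≥ √2
  have hle1 : ∀ u ∈ Icc (0:ℝ) θ, r u ≤ 1 := by
    intro u hu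
    rcases eq_or_lt_of_le hu.1 with h | h
    · rw [← h, r0]
    · have := hSA ⟨le_rfl, hθpos.le⟩ hu h
      rw [r0] at this
      exact this.le
  have hderiv_ge : ∀ t ∈ Icc (0:ℝ) θ, -t ≤ deriv r t := by
    intro t ht
    rw [hdf t ht.1, neg_le_neg_iff]
    have hm : ∫ u in (0:ℝ)..t, r (u - Δ) ≤ ∫ u in (0:ℝ)..t, (1:ℝ) := by
      apply intervalIntegral.integral_mono_on ht.1 (hcdInt 0 t) intervalIntegrable_const
      intro u hu
      rcases le_or_gt (u - Δ) 0 with h | h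
      · rw [hist _ h]
      · exact hle1 _ ⟨h.le, by linarith [hu.2, ht.2]⟩
    simpa using hm
  have hDcont2 : ContinuousOn (deriv r) (Icc (0:ℝ) θ) := by
    apply hG.continuousOn.congr
    intro t ht
    exact hdf t ht.1
  have hDint2 : IntervalIntegrable (deriv r) volume 0 θ := by
    apply ContinuousOn.intervalIntegrable
    rwa [uIcc_of_le hθpos.le]
  have hftc2 : ∫ u in (0:ℝ)..θ, deriv r u = r θ - r 0 := by
    apply intervalIntegral.integral_eq_sub_of_hasDerivAt _ hDint2
    intro t ht
    rw [uIcc_of_le hθpos.le] at ht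
    exact hder t ht.1
  have hmono2 : ∫ u in (0:ℝ)..θ, -u ≤ ∫ u in (0:ℝ)..θ, deriv r u := by
    apply intervalIntegral.integral_mono_on hθpos.le _ hDint2 hderiv_ge
    exact (continuous_neg.intervalIntegrable 0 θ)
  have hid : ∫ u in (0:ℝ)..θ, -u = -(θ ^ 2 / 2) := by
    rw [intervalIntegral.integral_neg, integral_id]
    ring
  have h2θ : 2 ≤ θ ^ 2 := by
    rw [hθzero, r0] at hftc2
    nlinarith [hftc2, hmono2, hid]
  have hsq : Real.sqrt 2 ≤ θ := by
    calc Real.sqrt 2 ≤ Real.sqrt (θ ^ 2) := Real.sqrt_le_sqrt h2θ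
      _ = θ := Real.sqrt_sq hθpos.le
  exact ⟨θ, ⟨hθpos, hθzero, hbefore⟩, hSA, hsq⟩
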